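/- Suppose f is a harmonic mapping on the closed disk {z : |z − a| ≤ r}, where r > 0. Then Λ_f(a) ≤ (2/(π r)) ∫_0^{2π} |f(a) − f(a + r e^{iθ})| dθ. -/

import Mathlib

open Complex MeasureTheory Metric Set Real
open scoped ENNReal

/-- The Wirtinger derivative `f_z = (f_x - i f_y)/2` of `f` at `z`
(real Fréchet derivative applied to the directions `1` and `i`). -/
noncomputable def wirtingerZ (f : ℂ → ℂ) (z : ℂ) : ℂ :=
  (fderiv ℝ f z 1 - Complex.I * fderiv ℝ f z Complex.I) / 2

/-- The Wirtinger derivative `f_z̄ = (f_x + i f_y)/2` of `f` at `z`. -/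
noncomputable def wirtingerZbar (f : ℂ → ℂ) (z : ℂ) : ℂ :=
  (fderiv ℝ f z 1 + Complex.I * fderiv ℝ f z Complex.I) / 2

/-- `Λ_f(z) = |f_z(z)| + |f_z̄(z)|`. -/
noncomputable def Lam (f : ℂ → ℂ) (z : ℂ) : ℝ :=
  ‖wirtingerZ f z‖ + ‖wirtingerZbar f z‖

/-- A complex-valued function is harmonic on a set: it is `C²` there and its
Laplacian `f_xx + f_yy` vanishes (equivalently, its real and imaginary parts are
real harmonic). -/
def IsHarmonicOn (f : ℂ → ℂ) (s : Set ℂ) : Prop :=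
  ContDiffOn ℝ 2 f s ∧ ∀ z ∈ s,
    fderiv ℝ (fun w => fderiv ℝ f w 1) z 1
      + fderiv ℝ (fun w => fderiv ℝ f w Complex.I) z Complex.I = 0

/-- A majorant: a continuous increasing function `ω : [0,∞) → [0,∞)` with
`ω 0 = 0` such that `ω t / t` is non-increasing for `t > 0`. -/
def IsMajorant (ω : ℝ → ℝ) : Prop :=
  ContinuousOn ω (Ici 0) ∧ MonotoneOn ω (Ici 0) ∧ ω 0 = 0 ∧
    ∀ s t : ℝ, 0 < s → s ≤ t → ω t / t ≤ ω s / s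

lemma cr_diff {g : ℂ → ℂ} {z : ℂ} (hg : DifferentiableAt ℝ g z)
    (hcr : fderiv ℝ g z Complex.I = Complex.I * fderiv ℝ g z 1) :
    DifferentiableAt ℂ g z := by
  set d : ℂ := fderiv ℝ g z 1 with hd
  have hM : (d • ContinuousLinearMap.id ℂ ℂ).restrictScalars ℝ = fderiv ℝ g z := by
    ext1 w
    rw [ContinuousLinearMap.coe_restrictScalars']
    have hw : w = (w.re : ℂ) + (w.im : ℂ) * Complex.I := (Complex.re_add_im w).symm
    have key : fderiv ℝ g z w = (w.re:ℂ) * d + (w.im:ℂ) * (Complex.I * d) := by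
      conv_lhs => rw [hw]
      have h1 : (w.re:ℂ) = (w.re:ℝ) • (1:ℂ) := by simp [Complex.real_smul]
      have h2 : (w.im:ℂ) * Complex.I = (w.im:ℝ) • Complex.I := by simp [Complex.real_smul]
      rw [h1, h2, map_add, ContinuousLinearMap.map_smul, ContinuousLinearMap.map_smul, hcr]
      simp [Complex.real_smul]
      exact Or.inl hd.symm
    rw [key]
    simp only [ContinuousLinearMap.smul_apply, ContinuousLinearMap.id_apply, smul_eq_mul]
    conv_lhs => rw [hw]
    ring
  exact (hasFDerivAt_of_restrictScalars ℝ hg.hasFDerivAt hM).differentiableAt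

-- conj of interval integral


lemma intervalIntegral_conj {u : ℝ → ℂ} {a b : ℝ} :
    ∫ x in a..b, (starRingEnd ℂ) (u x) = (starRingEnd ℂ) (∫ x in a..b, u x) := by
  simp only [intervalIntegral]
  rw [integral_conj, integral_conj, ← map_sub]


lemma meanvalue {φ : ℂ → ℂ} {a : ℂ} {t : ℝ} (ht : 0 < t)
    (hd : DifferentiableOn ℂ φ (closedBall a t)) :
    ∫ θ in (0:ℝ)..(2*π), φ (a + (t:ℂ) * Complex.exp ((θ:ℂ) * Complex.I))
      = 2*π*φ a := by
  have h := hd.circleIntegral_sub_inv_smul (mem_ball_self ht)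
  have key : ∫ θ in (0:ℝ)..(2*π), Complex.I * φ (a + (t:ℂ) * Complex.exp ((θ:ℂ) * Complex.I))
      = 2*π*Complex.I*φ a := by
    rw [show (2*π*Complex.I*φ a : ℂ) = (2*π*Complex.I : ℂ) • φ a by rw [smul_eq_mul], ← h]
    simp only [circleIntegral, deriv_circleMap, circleMap, smul_eq_mul]
    apply intervalIntegral.integral_congr
    intro θ _
    have hne : (t:ℂ) * Complex.exp ((θ:ℂ) * Complex.I) ≠ 0 :=
      mul_ne_zero (by exact_mod_cast ht.ne') (Complex.exp_ne_zero _)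
    field_simp
    have ht' : (t:ℂ) ≠ 0 := by exact_mod_cast ht.ne'
    have hE : Complex.exp (Complex.I * (θ:ℂ)) ≠ 0 := Complex.exp_ne_zero _
    linear_combination (-φ (a + (t:ℂ) * Complex.exp (Complex.I * θ))) * mul_inv_cancel₀ ht'
      + (-φ (a + (t:ℂ) * Complex.exp (Complex.I * θ)) * (t:ℂ) * (t:ℂ)⁻¹) * mul_inv_cancel₀ hE
  rw [intervalIntegral.integral_const_mul] at key
  rw [show (2*(π:ℂ)*Complex.I*φ a : ℂ) = Complex.I * (2*π*φ a) by ring] at key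
  exact mul_left_cancel₀ Complex.I_ne_zero key


lemma zerovalue {φ : ℂ → ℂ} {a : ℂ} {t r : ℝ} (ht : 0 < t) (htr : t < r)
    (hd : DifferentiableOn ℂ φ (ball a r)) :
    ∫ θ in (0:ℝ)..(2*π), Complex.exp ((θ:ℂ) * Complex.I) *
      (Complex.exp ((θ:ℂ) * Complex.I) * φ (a + (t:ℂ) * Complex.exp ((θ:ℂ) * Complex.I))) = 0 := by
  have hsub : closedBall a t ⊆ ball a r := closedBall_subset_ball htr
  have hc : ContinuousOn (fun z => (z - a) * φ z) (closedBall a t) :=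
    ((continuous_id.sub continuous_const).continuousOn).mul (hd.continuousOn.mono hsub)
  have hd' : ∀ z ∈ ball a t \ (∅ : Set ℂ), DifferentiableAt ℂ (fun z => (z - a) * φ z) z := by
    intro z hz
    have hz' : z ∈ ball a r := ball_subset_ball htr.le hz.1
    exact (differentiableAt_id.sub (differentiableAt_const _)).mul
      (hd.differentiableAt (isOpen_ball.mem_nhds hz'))
  have h := Complex.circleIntegral_eq_zero_of_differentiable_on_off_countable ht.le
    countable_empty hc hd'
  have key : ∫ θ in (0:ℝ)..(2*π), (Complex.I * t * t) *
      (Complex.exp ((θ:ℂ) * Complex.I) *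
        (Complex.exp ((θ:ℂ) * Complex.I) * φ (a + (t:ℂ) * Complex.exp ((θ:ℂ) * Complex.I)))) = 0 := by
    rw [← h]
    simp only [circleIntegral, deriv_circleMap, circleMap, smul_eq_mul]
    apply intervalIntegral.integral_congr
    intro θ _
    push_cast
    ring
  rw [intervalIntegral.integral_const_mul] at key
  have hne : (Complex.I * t * t : ℂ) ≠ 0 := by
    apply mul_ne_zero (mul_ne_zero Complex.I_ne_zero _) <;> exact_mod_cast ht.ne'
  exact (mul_eq_zero.1 key).resolve_left hne


lemma conj_expI (θ : ℝ) : (starRingEnd ℂ) (Complex.exp ((θ:ℂ) * Complex.I))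
    = Complex.exp (-(θ:ℂ) * Complex.I) := by
  rw [← Complex.exp_conj]
  congr 1
  simp


lemma mem_cb {a : ℂ} {s r : ℝ} (h0 : |s| ≤ r) (θ : ℝ) :
    a + (s:ℂ) * Complex.exp ((θ:ℂ) * Complex.I) ∈ closedBall a r := by
  simp only [mem_closedBall, dist_eq_norm, add_sub_cancel_left, norm_mul]
  rw [Complex.norm_exp_ofReal_mul_I]
  simpa using h0


lemma mem_ob {a : ℂ} {s r : ℝ} (h0 : |s| < r) (θ : ℝ) :
    a + (s:ℂ) * Complex.exp ((θ:ℂ) * Complex.I) ∈ ball a r := by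
  simp only [mem_ball, dist_eq_norm, add_sub_cancel_left, norm_mul]
  rw [Complex.norm_exp_ofReal_mul_I]
  simpa using h0


lemma my_swap {F : ℝ × ℝ → ℂ} {s : ℝ} (hs : 0 ≤ s)
    (hF : ContinuousOn F (Icc 0 (2*π) ×ˢ Icc 0 s)) :
    ∫ θ in (0:ℝ)..(2*π), ∫ t in (0:ℝ)..s, F (θ, t)
      = ∫ t in (0:ℝ)..s, ∫ θ in (0:ℝ)..(2*π), F (θ, t) := by
  have h2π : (0:ℝ) ≤ 2*π := by positivity
  have hInt : Integrable (Function.uncurry fun θ t => F (θ, t))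
      ((volume.restrict (Ioc 0 (2*π))).prod (volume.restrict (Ioc 0 s))) := by
    rw [Measure.prod_restrict]
    have hI : IntegrableOn F (Icc 0 (2*π) ×ˢ Icc 0 s) (volume.prod volume) := by
      apply hF.integrableOn_compact (isCompact_Icc.prod isCompact_Icc)
    have : IntegrableOn F (Ioc 0 (2*π) ×ˢ Ioc 0 s) (volume.prod volume) :=
      hI.mono_set (prod_mono Ioc_subset_Icc_self Ioc_subset_Icc_self)
    rw [← Measure.volume_eq_prod] at this ⊢
    exact this
  have := MeasureTheory.integral_integral_swap hInt
  simpa only [intervalIntegral.integral_of_le h2π, intervalIntegral.integral_of_le hs,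
    Function.uncurry] using this


lemma fderiv_eq_wirtinger (f : ℂ → ℂ) (z v : ℂ) :
    fderiv ℝ f z v = v * wirtingerZ f z + (starRingEnd ℂ) v * wirtingerZbar f z := by
  obtain ⟨x, y⟩ := v
  have hv : Complex.mk x y = (x:ℝ) • (1:ℂ) + (y:ℝ) • Complex.I := by
    simp [Complex.real_smul, Complex.mk_eq_add_mul_I]
  have hconj : (starRingEnd ℂ) (Complex.mk x y) = (x:ℂ) - (y:ℂ) * Complex.I := by
    simp [Complex.ext_iff]
  conv_lhs => rw [hv]
  rw [map_add, ContinuousLinearMap.map_smul, ContinuousLinearMap.map_smul, hconj,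
    wirtingerZ, wirtingerZbar, Complex.mk_eq_add_mul_I]
  simp only [Complex.real_smul, smul_eq_mul]
  set A := fderiv ℝ f z 1
  set B := fderiv ℝ f z Complex.I
  linear_combination ((y:ℂ) * B) * Complex.I_sq


lemma harmonic_wirtinger {f : ℂ → ℂ} {a : ℂ} {r : ℝ}
    (hf : IsHarmonicOn f (ball a r)) :
    DifferentiableOn ℂ (wirtingerZ f) (ball a r) ∧
    DifferentiableOn ℂ (fun w => (starRingEnd ℂ) (wirtingerZbar f w)) (ball a r) := by
  have hD : IsOpen (ball a r) := isOpen_ball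
  have hf' : ContDiffOn ℝ 1 (fun w => fderiv ℝ f w) (ball a r) :=
    hf.1.fderiv_of_isOpen hD (by norm_num)
  -- pointwise data
  have main : ∀ z ∈ ball a r, DifferentiableAt ℂ (wirtingerZ f) z ∧
      DifferentiableAt ℂ (fun w => (starRingEnd ℂ) (wirtingerZbar f w)) z := by
    intro z hz
    have hzn : ball a r ∈ nhds z := hD.mem_nhds hz
    have hf2 : ContDiffAt ℝ 2 f z := (hf.1 z hz).contDiffAt hzn
    have hd1 : DifferentiableAt ℝ (fun w => fderiv ℝ f w) z :=
      ((hf'.differentiableOn one_ne_zero) z hz).differentiableAt hzn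
    set T := fderiv ℝ (fun w => fderiv ℝ f w) z with hTdef
    have hT : HasFDerivAt (fun w => fderiv ℝ f w) T z := hd1.hasFDerivAt
    have hA : HasFDerivAt (fun w => fderiv ℝ f w 1)
        ((ContinuousLinearMap.apply ℝ ℂ (1:ℂ)).comp T) z :=
      (ContinuousLinearMap.apply ℝ ℂ (1:ℂ)).hasFDerivAt.comp z hT
    have hB : HasFDerivAt (fun w => fderiv ℝ f w Complex.I)
        ((ContinuousLinearMap.apply ℝ ℂ Complex.I).comp T) z :=
      (ContinuousLinearMap.apply ℝ ℂ Complex.I).hasFDerivAt.comp z hT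
    have hsym : T Complex.I 1 = T 1 Complex.I := by
      have := hf2.isSymmSndFDerivAt (by simp [minSmoothness_of_isRCLikeNormedField])
      exact this Complex.I 1
    have hlap : T 1 1 + T Complex.I Complex.I = 0 := by
      have h2 := hf.2 z hz
      rw [hA.fderiv] at h2
      rw [hB.fderiv] at h2
      exact h2
    -- derivative of wirtingerZ f
    have hg : HasFDerivAt (wirtingerZ f)
        ((2:ℂ)⁻¹ • (((ContinuousLinearMap.apply ℝ ℂ (1:ℂ)).comp T)
          - Complex.I • ((ContinuousLinearMap.apply ℝ ℂ Complex.I).comp T))) z := by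
      have h1 := (hA.sub (hB.const_mul Complex.I)).const_mul (2⁻¹:ℂ)
      have e : wirtingerZ f
          = fun w => (2⁻¹:ℂ) * (fderiv ℝ f w 1 - Complex.I * fderiv ℝ f w Complex.I) := by
        funext w; rw [wirtingerZ]; ring
      rw [e]; exact h1
    have hq : HasFDerivAt (wirtingerZbar f)
        ((2:ℂ)⁻¹ • (((ContinuousLinearMap.apply ℝ ℂ (1:ℂ)).comp T)
          + Complex.I • ((ContinuousLinearMap.apply ℝ ℂ Complex.I).comp T))) z := by
      have h1 := (hA.add (hB.const_mul Complex.I)).const_mul (2⁻¹:ℂ)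
      have e : wirtingerZbar f
          = fun w => (2⁻¹:ℂ) * (fderiv ℝ f w 1 + Complex.I * fderiv ℝ f w Complex.I) := by
        funext w; rw [wirtingerZbar]; ring
      rw [e]; exact h1
    constructor
    · apply cr_diff hg.differentiableAt
      rw [hg.fderiv]
      simp only [ContinuousLinearMap.smul_apply, ContinuousLinearMap.sub_apply,
        ContinuousLinearMap.comp_apply, ContinuousLinearMap.apply_apply, smul_eq_mul]
      linear_combination (2:ℂ)⁻¹ * hsym - (2:ℂ)⁻¹ * Complex.I * hlap
        + (T 1 Complex.I / 2) * Complex.I_sq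
    · have hh : HasFDerivAt (fun w => (starRingEnd ℂ) (wirtingerZbar f w))
          ((Complex.conjCLE.toContinuousLinearMap).comp
            ((2:ℂ)⁻¹ • (((ContinuousLinearMap.apply ℝ ℂ (1:ℂ)).comp T)
              + Complex.I • ((ContinuousLinearMap.apply ℝ ℂ Complex.I).comp T)))) z :=
        (Complex.conjCLE.toContinuousLinearMap.hasFDerivAt).comp z hq
      apply cr_diff hh.differentiableAt
      rw [hh.fderiv]
      simp only [ContinuousLinearMap.comp_apply, ContinuousLinearMap.smul_apply,
        ContinuousLinearMap.add_apply, ContinuousLinearMap.apply_apply,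
        ContinuousLinearEquiv.coe_coe, Complex.conjCLE_apply, smul_eq_mul]
      rw [show Complex.I * (starRingEnd ℂ) ((2:ℂ)⁻¹ * (T 1 1 + Complex.I * T 1 Complex.I))
          = (starRingEnd ℂ) ((-Complex.I) * ((2:ℂ)⁻¹ * (T 1 1 + Complex.I * T 1 Complex.I))) by
        rw [map_mul]; simp]
      congr 1
      linear_combination (2:ℂ)⁻¹ * hsym - (2:ℂ)⁻¹ * Complex.I * hlap
        + Complex.I * hlap + (T 1 Complex.I / 2) * Complex.I_sq
  exact ⟨fun z hz => (main z hz).1.differentiableWithinAt,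
    fun z hz => (main z hz).2.differentiableWithinAt⟩


lemma radial_ftc {f : ℂ → ℂ} {a : ℂ} {r s : ℝ} (hs : 0 < s) (hsr : s < r)
    (hf1 : ContDiffOn ℝ 2 f (ball a r))
    (hgc : ContinuousOn (wirtingerZ f) (ball a r))
    (hqc : ContinuousOn (wirtingerZbar f) (ball a r)) (θ : ℝ) :
    f (a + (s:ℂ) * Complex.exp ((θ:ℂ)*Complex.I)) - f a
      = ∫ t in (0:ℝ)..s,
          (Complex.exp ((θ:ℂ)*Complex.I)
              * wirtingerZ f (a + (t:ℂ)*Complex.exp ((θ:ℂ)*Complex.I))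
          + Complex.exp (-(θ:ℂ)*Complex.I)
              * wirtingerZbar f (a + (t:ℂ)*Complex.exp ((θ:ℂ)*Complex.I))) := by
  set e := Complex.exp ((θ:ℂ)*Complex.I) with he
  have hmem : ∀ t ∈ uIcc (0:ℝ) s, a + (t:ℂ)*e ∈ ball a r := by
    intro t ht
    rw [uIcc_of_le hs.le] at ht
    exact mem_ob (lt_of_le_of_lt
      (abs_le.mpr ⟨by linarith [ht.1], ht.2⟩ : |t| ≤ s) hsr) θ
  have hderiv : ∀ t ∈ uIcc (0:ℝ) s, HasDerivAt (fun t : ℝ => f (a + (t:ℂ)*e))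
      (e * wirtingerZ f (a + (t:ℂ)*e)
        + Complex.exp (-(θ:ℂ)*Complex.I) * wirtingerZbar f (a + (t:ℂ)*e)) t := by
    intro t ht
    have hpt := hmem t ht
    have hfd : HasFDerivAt f (fderiv ℝ f (a + (t:ℂ)*e)) (a + (t:ℂ)*e) :=
      (((hf1.differentiableOn (by norm_num)) _ hpt).differentiableAt
        (isOpen_ball.mem_nhds hpt)).hasFDerivAt
    have hc : HasDerivAt (fun t : ℝ => a + (t:ℂ)*e) e t := by
      have heq : (fun t : ℝ => a + (t:ℂ)*e) = fun t : ℝ => a + t • e := by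
        funext u; rw [Complex.real_smul]
      rw [heq]
      simpa using ((hasDerivAt_id t).smul_const e).const_add a
    have hcomp := hfd.comp_hasDerivAt t hc
    exact hcomp.congr_deriv (by rw [fderiv_eq_wirtinger f _ e, he, conj_expI])
  have hpath : Continuous fun t : ℝ => a + (t:ℂ)*e := by
    exact continuous_const.add ((Complex.continuous_ofReal).mul continuous_const)
  have hcont : ContinuousOn (fun t : ℝ => e * wirtingerZ f (a + (t:ℂ)*e)
      + Complex.exp (-(θ:ℂ)*Complex.I) * wirtingerZbar f (a + (t:ℂ)*e)) (uIcc 0 s) :=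
    (continuousOn_const.mul (hgc.comp hpath.continuousOn hmem)).add
      (continuousOn_const.mul (hqc.comp hpath.continuousOn hmem))
  rw [intervalIntegral.integral_eq_sub_of_hasDerivAt hderiv hcont.intervalIntegrable]
  simp


lemma key_ids {f : ℂ → ℂ} {a : ℂ} {r s : ℝ} (hs : 0 < s) (hsr : s < r)
    (hf : IsHarmonicOn f (ball a r)) :
    (∫ θ in (0:ℝ)..(2*π), Complex.exp (-(θ:ℂ)*Complex.I)
        * (f (a + (s:ℂ)*Complex.exp ((θ:ℂ)*Complex.I)) - f a)
      = 2*(π:ℂ)*(s:ℂ) * wirtingerZ f a) ∧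
    (∫ θ in (0:ℝ)..(2*π), Complex.exp ((θ:ℂ)*Complex.I)
        * (f (a + (s:ℂ)*Complex.exp ((θ:ℂ)*Complex.I)) - f a)
      = 2*(π:ℂ)*(s:ℂ) * wirtingerZbar f a) := by
  obtain ⟨hgd, hhd⟩ := harmonic_wirtinger hf
  have hgc : ContinuousOn (wirtingerZ f) (ball a r) := hgd.continuousOn
  have hhc : ContinuousOn (fun w => (starRingEnd ℂ) (wirtingerZbar f w)) (ball a r) :=
    hhd.continuousOn
  have hqc : ContinuousOn (wirtingerZbar f) (ball a r) := by
    have h2 := Complex.continuous_conj.comp_continuousOn hhc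
    have : (fun w => (starRingEnd ℂ) ((starRingEnd ℂ) (wirtingerZbar f w)))
        = wirtingerZbar f := by funext w; simp
    rwa [Function.comp_def, this] at h2
  -- path continuity on the product
  have hexpθp : Continuous fun θ : ℝ => Complex.exp ((θ:ℂ) * Complex.I) :=
    Complex.continuous_exp.comp (Complex.continuous_ofReal.mul continuous_const)
  have hexpθm : Continuous fun θ : ℝ => Complex.exp (-(θ:ℂ) * Complex.I) :=
    Complex.continuous_exp.comp (Complex.continuous_ofReal.neg.mul continuous_const)
  have hCc : Continuous fun p : ℝ × ℝ => a + (p.2:ℂ) * Complex.exp ((p.1:ℂ) * Complex.I) :=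
    continuous_const.add ((Complex.continuous_ofReal.comp continuous_snd).mul
      (hexpθp.comp continuous_fst))
  have hmaps : ∀ p : ℝ × ℝ, p ∈ Icc 0 (2*π) ×ˢ Icc 0 s →
      a + (p.2:ℂ) * Complex.exp ((p.1:ℂ) * Complex.I) ∈ ball a r := by
    rintro ⟨θ, t⟩ ⟨_, ht⟩
    exact mem_ob (lt_of_le_of_lt (abs_le.mpr ⟨by linarith [ht.1], ht.2⟩) hsr) θ
  have hgp : ContinuousOn
      (fun p : ℝ × ℝ => wirtingerZ f (a + (p.2:ℂ) * Complex.exp ((p.1:ℂ) * Complex.I)))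
      (Icc 0 (2*π) ×ˢ Icc 0 s) := hgc.comp hCc.continuousOn hmaps
  have hqp : ContinuousOn
      (fun p : ℝ × ℝ => wirtingerZbar f (a + (p.2:ℂ) * Complex.exp ((p.1:ℂ) * Complex.I)))
      (Icc 0 (2*π) ×ˢ Icc 0 s) := hqc.comp hCc.continuousOn hmaps
  have hexpm : Continuous fun p : ℝ × ℝ => Complex.exp (-(p.1:ℂ) * Complex.I) :=
    hexpθm.comp continuous_fst
  have hexpp : Continuous fun p : ℝ × ℝ => Complex.exp ((p.1:ℂ) * Complex.I) :=
    hexpθp.comp continuous_fst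
  have hcbsub : ∀ t : ℝ, 0 < t → t ≤ s → closedBall a t ⊆ ball a r := fun t ht hts =>
    closedBall_subset_ball (lt_of_le_of_lt hts hsr)
  -- inner integral values
  have inner1 : ∀ t : ℝ, t ∈ Ioc (0:ℝ) s →
      (∫ θ in (0:ℝ)..(2*π),
        (wirtingerZ f (a + (t:ℂ) * Complex.exp ((θ:ℂ) * Complex.I))
          + Complex.exp (-(θ:ℂ)*Complex.I) * (Complex.exp (-(θ:ℂ)*Complex.I)
            * wirtingerZbar f (a + (t:ℂ) * Complex.exp ((θ:ℂ) * Complex.I)))))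
      = 2*(π:ℂ) * wirtingerZ f a := by
    intro t ht
    have htr : t < r := lt_of_le_of_lt ht.2 hsr
    have hmemθ : ∀ θ : ℝ, a + (t:ℂ) * Complex.exp ((θ:ℂ) * Complex.I) ∈ ball a r :=
      fun θ => mem_ob (by rw [abs_of_pos ht.1]; exact htr) θ
    have hpathθ : Continuous fun θ : ℝ => a + (t:ℂ) * Complex.exp ((θ:ℂ) * Complex.I) :=
      continuous_const.add (continuous_const.mul hexpθp)
    have hInt1 : IntervalIntegrable
        (fun θ : ℝ => wirtingerZ f (a + (t:ℂ) * Complex.exp ((θ:ℂ) * Complex.I)))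
        volume 0 (2*π) :=
      ((hgc.comp hpathθ.continuousOn fun θ _ => hmemθ θ).intervalIntegrable)
    have hInt2 : IntervalIntegrable
        (fun θ : ℝ => Complex.exp (-(θ:ℂ)*Complex.I) * (Complex.exp (-(θ:ℂ)*Complex.I)
          * wirtingerZbar f (a + (t:ℂ) * Complex.exp ((θ:ℂ) * Complex.I)))) volume 0 (2*π) := by
      apply ContinuousOn.intervalIntegrable
      exact (hexpθm.continuousOn).mul
        ((hexpθm.continuousOn).mul
          (hqc.comp hpathθ.continuousOn fun θ _ => hmemθ θ))
    rw [intervalIntegral.integral_add hInt1 hInt2]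
    have hP1 : ∫ θ in (0:ℝ)..(2*π),
        wirtingerZ f (a + (t:ℂ) * Complex.exp ((θ:ℂ) * Complex.I)) = 2*π* wirtingerZ f a :=
      meanvalue ht.1 (hgd.mono (hcbsub t ht.1 ht.2))
    have hP2 : ∫ θ in (0:ℝ)..(2*π), Complex.exp (-(θ:ℂ)*Complex.I)
        * (Complex.exp (-(θ:ℂ)*Complex.I)
          * wirtingerZbar f (a + (t:ℂ) * Complex.exp ((θ:ℂ) * Complex.I))) = 0 := by
      have hz := zerovalue (φ := fun w => (starRingEnd ℂ) (wirtingerZbar f w)) ht.1 htr hhd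
      have hcongr : ∫ θ in (0:ℝ)..(2*π), Complex.exp (-(θ:ℂ)*Complex.I)
          * (Complex.exp (-(θ:ℂ)*Complex.I)
            * wirtingerZbar f (a + (t:ℂ) * Complex.exp ((θ:ℂ) * Complex.I)))
          = ∫ θ in (0:ℝ)..(2*π), (starRingEnd ℂ) (Complex.exp ((θ:ℂ) * Complex.I) *
              (Complex.exp ((θ:ℂ) * Complex.I) *
                (starRingEnd ℂ) (wirtingerZbar f
                  (a + (t:ℂ) * Complex.exp ((θ:ℂ) * Complex.I))))) := by
        apply intervalIntegral.integral_congr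
        intro θ _
        simp only [map_mul, conj_expI, Complex.conj_conj]
      rw [hcongr, intervalIntegral_conj, hz, map_zero]
    rw [hP1, hP2, add_zero]
  have inner2 : ∀ t : ℝ, t ∈ Ioc (0:ℝ) s →
      (∫ θ in (0:ℝ)..(2*π),
        (Complex.exp ((θ:ℂ)*Complex.I) * (Complex.exp ((θ:ℂ)*Complex.I)
            * wirtingerZ f (a + (t:ℂ) * Complex.exp ((θ:ℂ) * Complex.I)))
          + wirtingerZbar f (a + (t:ℂ) * Complex.exp ((θ:ℂ) * Complex.I))))
      = 2*(π:ℂ) * wirtingerZbar f a := by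
    intro t ht
    have htr : t < r := lt_of_le_of_lt ht.2 hsr
    have hmemθ : ∀ θ : ℝ, a + (t:ℂ) * Complex.exp ((θ:ℂ) * Complex.I) ∈ ball a r :=
      fun θ => mem_ob (by rw [abs_of_pos ht.1]; exact htr) θ
    have hpathθ : Continuous fun θ : ℝ => a + (t:ℂ) * Complex.exp ((θ:ℂ) * Complex.I) :=
      continuous_const.add (continuous_const.mul hexpθp)
    have hInt1 : IntervalIntegrable
        (fun θ : ℝ => Complex.exp ((θ:ℂ)*Complex.I) * (Complex.exp ((θ:ℂ)*Complex.I)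
          * wirtingerZ f (a + (t:ℂ) * Complex.exp ((θ:ℂ) * Complex.I)))) volume 0 (2*π) := by
      apply ContinuousOn.intervalIntegrable
      exact (hexpθp.continuousOn).mul
        ((hexpθp.continuousOn).mul
          (hgc.comp hpathθ.continuousOn fun θ _ => hmemθ θ))
    have hInt2 : IntervalIntegrable
        (fun θ : ℝ => wirtingerZbar f (a + (t:ℂ) * Complex.exp ((θ:ℂ) * Complex.I)))
        volume 0 (2*π) :=
      ((hqc.comp hpathθ.continuousOn fun θ _ => hmemθ θ).intervalIntegrable)
    rw [intervalIntegral.integral_add hInt1 hInt2]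
    have hP1 : ∫ θ in (0:ℝ)..(2*π), Complex.exp ((θ:ℂ)*Complex.I)
        * (Complex.exp ((θ:ℂ)*Complex.I)
          * wirtingerZ f (a + (t:ℂ) * Complex.exp ((θ:ℂ) * Complex.I))) = 0 :=
      zerovalue ht.1 htr hgd
    have hP2 : ∫ θ in (0:ℝ)..(2*π),
        wirtingerZbar f (a + (t:ℂ) * Complex.exp ((θ:ℂ) * Complex.I))
        = 2*(π:ℂ) * wirtingerZbar f a := by
      have hmv := meanvalue (φ := fun w => (starRingEnd ℂ) (wirtingerZbar f w)) ht.1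
        (hhd.mono (hcbsub t ht.1 ht.2))
      have hcongr : ∫ θ in (0:ℝ)..(2*π),
          wirtingerZbar f (a + (t:ℂ) * Complex.exp ((θ:ℂ) * Complex.I))
          = ∫ θ in (0:ℝ)..(2*π), (starRingEnd ℂ) ((starRingEnd ℂ)
              (wirtingerZbar f (a + (t:ℂ) * Complex.exp ((θ:ℂ) * Complex.I)))) := by
        apply intervalIntegral.integral_congr
        intro θ _
        simp
      rw [hcongr, intervalIntegral_conj, hmv, map_mul, map_mul, Complex.conj_conj]
      rw [Complex.conj_ofReal, map_ofNat]
    rw [hP1, hP2, zero_add]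
  constructor
  · have step1 : ∫ θ in (0:ℝ)..(2*π), Complex.exp (-(θ:ℂ)*Complex.I)
        * (f (a + (s:ℂ)*Complex.exp ((θ:ℂ)*Complex.I)) - f a)
        = ∫ θ in (0:ℝ)..(2*π), ∫ t in (0:ℝ)..s,
            (wirtingerZ f (a + (t:ℂ) * Complex.exp ((θ:ℂ) * Complex.I))
              + Complex.exp (-(θ:ℂ)*Complex.I) * (Complex.exp (-(θ:ℂ)*Complex.I)
                * wirtingerZbar f (a + (t:ℂ) * Complex.exp ((θ:ℂ) * Complex.I)))) := by
      apply intervalIntegral.integral_congr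
      intro θ _
      dsimp only
      rw [radial_ftc hs hsr hf.1 hgc hqc θ, ← intervalIntegral.integral_const_mul]
      apply intervalIntegral.integral_congr
      intro t _
      have h1 : Complex.exp (-(θ:ℂ)*Complex.I) * Complex.exp ((θ:ℂ)*Complex.I) = 1 := by
        rw [← Complex.exp_add, neg_mul, neg_add_cancel, Complex.exp_zero]
      simp only []
      linear_combination (wirtingerZ f (a + (t:ℂ) * Complex.exp ((θ:ℂ) * Complex.I))) * h1
    rw [step1]
    have step2 := my_swap (s := s)
      (F := fun p : ℝ × ℝ =>
        wirtingerZ f (a + (p.2:ℂ) * Complex.exp ((p.1:ℂ) * Complex.I))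
          + Complex.exp (-(p.1:ℂ)*Complex.I) * (Complex.exp (-(p.1:ℂ)*Complex.I)
            * wirtingerZbar f (a + (p.2:ℂ) * Complex.exp ((p.1:ℂ) * Complex.I)))) hs.le
      (by exact hgp.add ((hexpm.continuousOn).mul ((hexpm.continuousOn).mul hqp)))
    rw [step2]
    rw [intervalIntegral.integral_of_le hs.le]
    rw [MeasureTheory.setIntegral_congr_fun measurableSet_Ioc
      (fun t ht => inner1 t ht)]
    simp [Real.volume_Ioc, ENNReal.toReal_ofReal hs.le]
    push_cast
    rw [max_eq_left hs.le]
    ring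
  · have step1 : ∫ θ in (0:ℝ)..(2*π), Complex.exp ((θ:ℂ)*Complex.I)
        * (f (a + (s:ℂ)*Complex.exp ((θ:ℂ)*Complex.I)) - f a)
        = ∫ θ in (0:ℝ)..(2*π), ∫ t in (0:ℝ)..s,
            (Complex.exp ((θ:ℂ)*Complex.I) * (Complex.exp ((θ:ℂ)*Complex.I)
                * wirtingerZ f (a + (t:ℂ) * Complex.exp ((θ:ℂ) * Complex.I)))
              + wirtingerZbar f (a + (t:ℂ) * Complex.exp ((θ:ℂ) * Complex.I))) := by
      apply intervalIntegral.integral_congr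
      intro θ _
      dsimp only
      rw [radial_ftc hs hsr hf.1 hgc hqc θ, ← intervalIntegral.integral_const_mul]
      apply intervalIntegral.integral_congr
      intro t _
      have h1 : Complex.exp ((θ:ℂ)*Complex.I) * Complex.exp (-(θ:ℂ)*Complex.I) = 1 := by
        rw [← Complex.exp_add, neg_mul, add_neg_cancel, Complex.exp_zero]
      simp only []
      linear_combination (wirtingerZbar f (a + (t:ℂ) * Complex.exp ((θ:ℂ) * Complex.I))) * h1
    rw [step1]
    have step2 := my_swap (s := s)
      (F := fun p : ℝ × ℝ =>
        Complex.exp ((p.1:ℂ)*Complex.I) * (Complex.exp ((p.1:ℂ)*Complex.I)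
            * wirtingerZ f (a + (p.2:ℂ) * Complex.exp ((p.1:ℂ) * Complex.I)))
          + wirtingerZbar f (a + (p.2:ℂ) * Complex.exp ((p.1:ℂ) * Complex.I))) hs.le
      (by exact ((hexpp.continuousOn).mul ((hexpp.continuousOn).mul hgp)).add hqp)
    rw [step2]
    rw [intervalIntegral.integral_of_le hs.le]
    rw [MeasureTheory.setIntegral_congr_fun measurableSet_Ioc
      (fun t ht => inner2 t ht)]
    simp [Real.volume_Ioc, ENNReal.toReal_ofReal hs.le]
    push_cast
    rw [max_eq_left hs.le]
    ring


/-- Lemma 2: if `f` is a harmonic mapping on the closed disk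
`{z : |z - a| ≤ r}` with `r > 0` (harmonic inside, continuous up to the boundary),
then `Λ_f(a) ≤ (2/(πr)) ∫₀^{2π} |f(a) - f(a + r e^{iθ})| dθ`. -/
theorem stmt14 (f : ℂ → ℂ) (a : ℂ) (r : ℝ) (hr : 0 < r)
    (hf : IsHarmonicOn f (ball a r)) (hfc : ContinuousOn f (closedBall a r)) :
    Lam f a ≤ (2 / (π * r)) *
      ∫ θ in (0:ℝ)..(2 * π), ‖f a - f (a + (r : ℂ) * Complex.exp ((θ : ℂ) * Complex.I))‖ := by
  have h2π : (0:ℝ) ≤ 2*π := by positivity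
  set J : ℝ → ℝ :=
    fun s => ∫ θ in (0:ℝ)..(2*π), ‖f a - f (a + (s:ℂ)*Complex.exp ((θ:ℂ)*Complex.I))‖ with hJ
  have hnorm1 : ∀ (s θ : ℝ), ‖Complex.exp (-(θ:ℂ)*Complex.I)
      * (f (a + (s:ℂ)*Complex.exp ((θ:ℂ)*Complex.I)) - f a)‖
      = ‖f a - f (a + (s:ℂ)*Complex.exp ((θ:ℂ)*Complex.I))‖ := by
    intro s θ
    rw [norm_mul, show (-(θ:ℂ)*Complex.I) = ((-θ:ℝ):ℂ)*Complex.I by push_cast; ring,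
      Complex.norm_exp_ofReal_mul_I, one_mul, norm_sub_rev]
  have hnorm2 : ∀ (s θ : ℝ), ‖Complex.exp ((θ:ℂ)*Complex.I)
      * (f (a + (s:ℂ)*Complex.exp ((θ:ℂ)*Complex.I)) - f a)‖
      = ‖f a - f (a + (s:ℂ)*Complex.exp ((θ:ℂ)*Complex.I))‖ := by
    intro s θ
    rw [norm_mul, Complex.norm_exp_ofReal_mul_I, one_mul, norm_sub_rev]
  have key : ∀ s ∈ Ioo (0:ℝ) r, Lam f a ≤ J s / (π * s) := by
    intro s hs
    obtain ⟨h1, h2⟩ := key_ids hs.1 hs.2 hf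
    have hcn : ∀ x : ℂ, ‖2*(π:ℂ)*(s:ℂ) * x‖ = 2*π*s*‖x‖ := by
      intro x
      rw [norm_mul, norm_mul, norm_mul, Complex.norm_real, Complex.norm_real,
        Real.norm_eq_abs, Real.norm_eq_abs, abs_of_pos Real.pi_pos, abs_of_pos hs.1]
      norm_num
    have e1 : 2*π*s*‖wirtingerZ f a‖ ≤ J s := by
      rw [← hcn, ← h1]
      calc ‖∫ θ in (0:ℝ)..(2*π), Complex.exp (-(θ:ℂ)*Complex.I)
            * (f (a + (s:ℂ)*Complex.exp ((θ:ℂ)*Complex.I)) - f a)‖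
          ≤ ∫ θ in (0:ℝ)..(2*π), ‖Complex.exp (-(θ:ℂ)*Complex.I)
            * (f (a + (s:ℂ)*Complex.exp ((θ:ℂ)*Complex.I)) - f a)‖ :=
            intervalIntegral.norm_integral_le_integral_norm h2π
        _ = J s := by
            rw [hJ]
            apply intervalIntegral.integral_congr
            intro θ _
            exact hnorm1 s θ
    have e2 : 2*π*s*‖wirtingerZbar f a‖ ≤ J s := by
      rw [← hcn, ← h2]
      calc ‖∫ θ in (0:ℝ)..(2*π), Complex.exp ((θ:ℂ)*Complex.I)
            * (f (a + (s:ℂ)*Complex.exp ((θ:ℂ)*Complex.I)) - f a)‖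
          ≤ ∫ θ in (0:ℝ)..(2*π), ‖Complex.exp ((θ:ℂ)*Complex.I)
            * (f (a + (s:ℂ)*Complex.exp ((θ:ℂ)*Complex.I)) - f a)‖ :=
            intervalIntegral.norm_integral_le_integral_norm h2π
        _ = J s := by
            rw [hJ]
            apply intervalIntegral.integral_congr
            intro θ _
            exact hnorm2 s θ
    have hπs : 0 < π * s := mul_pos Real.pi_pos hs.1
    rw [Lam, le_div_iff₀ hπs]
    nlinarith [e1, e2]
  obtain ⟨M, hM⟩ := (isCompact_closedBall a r).exists_bound_of_continuousOn hfc
  have hIoo : Ioo (0:ℝ) r ∈ nhdsWithin r (Iio r) :=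
    Ioo_mem_nhdsLT_of_mem ⟨hr, le_refl r⟩
  have hJc : Filter.Tendsto J (nhdsWithin r (Iio r)) (nhds (J r)) := by
    apply intervalIntegral.tendsto_integral_filter_of_dominated_convergence
      (bound := fun _ => ‖f a‖ + M)
    · filter_upwards [hIoo] with s hs
      apply Continuous.aestronglyMeasurable
      have hcf : Continuous fun θ : ℝ => f (a + (s:ℂ)*Complex.exp ((θ:ℂ)*Complex.I)) := by
        apply hfc.comp_continuous
        · exact continuous_const.add (continuous_const.mul
            (Complex.continuous_exp.comp (Complex.continuous_ofReal.mul continuous_const)))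
        · intro θ
          exact mem_cb (by rw [abs_of_pos hs.1]; exact hs.2.le) θ
      exact (continuous_const.sub hcf).norm
    · filter_upwards [hIoo] with s hs
      apply MeasureTheory.ae_of_all
      intro θ _
      rw [norm_norm]
      calc ‖f a - f (a + (s:ℂ)*Complex.exp ((θ:ℂ)*Complex.I))‖
          ≤ ‖f a‖ + ‖f (a + (s:ℂ)*Complex.exp ((θ:ℂ)*Complex.I))‖ := norm_sub_le _ _
        _ ≤ ‖f a‖ + M := by
            have := hM _ (mem_cb (s := s) (a := a) (by rw [abs_of_pos hs.1]; exact hs.2.le) θ)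
            linarith
    · exact intervalIntegrable_const
    · apply MeasureTheory.ae_of_all
      intro θ _
      have hpath : Filter.Tendsto (fun s : ℝ => a + (s:ℂ)*Complex.exp ((θ:ℂ)*Complex.I))
          (nhdsWithin r (Iio r)) (nhdsWithin (a + (r:ℂ)*Complex.exp ((θ:ℂ)*Complex.I))
            (closedBall a r)) := by
        apply tendsto_nhdsWithin_of_tendsto_nhds_of_eventually_within
        · exact ((continuous_const.add ((Complex.continuous_ofReal).mul
            continuous_const)).tendsto r).mono_left nhdsWithin_le_nhds
        · filter_upwards [hIoo] with s hs
          exact mem_cb (by rw [abs_of_pos hs.1]; exact hs.2.le) θ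
      have hT : Filter.Tendsto (fun s : ℝ => f (a + (s:ℂ)*Complex.exp ((θ:ℂ)*Complex.I)))
          (nhdsWithin r (Iio r)) (nhds (f (a + (r:ℂ)*Complex.exp ((θ:ℂ)*Complex.I)))) := by
        have hwa : ContinuousWithinAt f (closedBall a r)
            (a + (r:ℂ)*Complex.exp ((θ:ℂ)*Complex.I)) :=
          hfc _ (mem_cb (by rw [abs_of_pos hr]) θ)
        exact hwa.tendsto.comp hpath
      exact (Filter.Tendsto.sub tendsto_const_nhds hT).norm
  have hπr : (0:ℝ) < π * r := by positivity
  have hfrac : Filter.Tendsto (fun s => J s / (π * s)) (nhdsWithin r (Iio r))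
      (nhds (J r / (π * r))) := by
    apply Filter.Tendsto.div hJc
    · exact ((continuous_const.mul continuous_id).tendsto r).mono_left nhdsWithin_le_nhds
    · exact hπr.ne'
  have hle : Lam f a ≤ J r / (π * r) := by
    apply ge_of_tendsto hfrac
    filter_upwards [hIoo] with s hs
    exact key s hs
  have hJr0 : 0 ≤ J r :=
    intervalIntegral.integral_nonneg h2π (fun θ _ => norm_nonneg _)
  have hfin : J r / (π * r) ≤ 2 / (π * r) * J r := by
    have hd : 0 ≤ J r / (π * r) := div_nonneg hJr0 hπr.le
    have : 2 / (π * r) * J r = J r / (π * r) + J r / (π * r) := by ring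
    linarith
  exact hle.trans hfin
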